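/- arXiv:1504.01638 — 2 statements merged into one kernel-verified Lean document; each statement's English description precedes it below -/
import Mathlib

section
/- Let C* > 0, let θ := C*/(C*+1) ∈ (0,1), let d ≥ 2 and m ≥ 3 be an even integer satisfying 1 − 2^{5−3d} B/m² > 1/2, where B := Σ_{k=1}^∞ θ^k (2k−1)^{3d−5}. Suppose (E_j)_{j≥1} is a family of nonnegative reals indexed by odd multiples of m' := m/2, i.e. E_{(2p+1)m'} for p ≥ 0, with E_{(2p+1)m'} = 0 for p large, E_{m'} ≥ E_{(2p+1)m'} for all p, and satisfying for all p ≥ 0: E_{(2p+1)m'} ≤ C* ( ((2p+1)m')^{d−1} + E_{(2p+3)m'} − E_{(2p+1)m'} + ((2p+1)m')^{3d−5}/m^{3d−3} · E_{m'} ). Then E_{m'} ≤ 2^{2−d} A m^{d−1}, where A := Σ_{k=1}^∞ θ^k (2k−1)^{d−1}. -/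
lemma aux_summable (θ : ℝ) (h0 : 0 ≤ θ) (h1 : θ < 1) (j : ℕ) :
    Summable (fun k : ℕ => θ ^ (k + 1) * (2 * (k : ℝ) + 1) ^ j) := by
  have hn : ‖θ‖ < 1 := by rwa [Real.norm_eq_abs, abs_of_nonneg h0]
  have h := summable_pow_mul_geometric_of_norm_lt_one j hn
  have h2 : Summable (fun k : ℕ => ((k : ℝ) + 1) ^ j * θ ^ (k + 1)) := by
    have h3 := (summable_nat_add_iff (f := fun n : ℕ => (n : ℝ) ^ j * θ ^ n) 1).mpr h
    convert h3 using 2 with k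
    case e'_5 =>
      push_cast
      ring
    case e'_3 => rfl
  apply Summable.of_nonneg_of_le
    (f := fun k : ℕ => 2 ^ j * (((k : ℝ) + 1) ^ j * θ ^ (k + 1)))
  · intro k; positivity
  · intro k
    have hb : (2 * (k : ℝ) + 1) ≤ 2 * ((k : ℝ) + 1) := by linarith
    calc θ ^ (k + 1) * (2 * (k : ℝ) + 1) ^ j
        ≤ θ ^ (k + 1) * (2 * ((k : ℝ) + 1)) ^ j := by
          exact mul_le_mul_of_nonneg_left (pow_le_pow_left₀ (by positivity) hb j)
            (by positivity)
      _ = 2 ^ j * (((k : ℝ) + 1) ^ j * θ ^ (k + 1)) := by rw [mul_pow]; ring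
  · exact h2.mul_left _

/-- downward induction a priori bound. Writing E p for E_{(2p+1)m'}
with m' = m/2, the Saint-Venant recursion plus eventual vanishing and maximality
of E 0 yield E_{m'} ≤ 2^{2−d} A m^{d−1}. -/
theorem stmt_7 (Cstar : ℝ) (hCstar : 0 < Cstar) (d : ℕ) (hd : 2 ≤ d)
    (m : ℕ) (hm3 : 3 ≤ m) (hmeven : Even m)
    (A B : ℝ)
    (hA : A = ∑' k : ℕ, (Cstar / (Cstar + 1)) ^ (k + 1) * (2 * (k : ℝ) + 1) ^ (d - 1))
    (hB : B = ∑' k : ℕ, (Cstar / (Cstar + 1)) ^ (k + 1) * (2 * (k : ℝ) + 1) ^ (3 * d - 5))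
    (hsmall : 1 - (2 : ℝ) ^ ((5 : ℤ) - 3 * d) * B / (m : ℝ) ^ 2 > 1 / 2)
    (E : ℕ → ℝ) (hnn : ∀ p, 0 ≤ E p)
    (hzero : ∃ P : ℕ, ∀ p, P ≤ p → E p = 0)
    (hmax : ∀ p, E p ≤ E 0)
    (hrec : ∀ p : ℕ, E p ≤ Cstar * (((2 * (p : ℝ) + 1) * ((m : ℝ) / 2)) ^ (d - 1)
        + E (p + 1) - E p
        + ((2 * (p : ℝ) + 1) * ((m : ℝ) / 2)) ^ (3 * d - 5) / (m : ℝ) ^ (3 * d - 3) * E 0)) :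
    E 0 ≤ (2 : ℝ) ^ ((2 : ℤ) - d) * A * (m : ℝ) ^ (d - 1) := by
  obtain ⟨P, hP⟩ := hzero
  set θ : ℝ := Cstar / (Cstar + 1) with hθ
  have hC1 : (0 : ℝ) < Cstar + 1 := by linarith
  have hθ0 : 0 ≤ θ := by positivity
  have hθ1 : θ < 1 := by rw [hθ, div_lt_one hC1]; linarith
  have hm0 : (0 : ℝ) < (m : ℝ) := by exact_mod_cast (by omega : 0 < m)
  set X : ℕ → ℝ := fun p => ((2 * (p : ℝ) + 1) * ((m : ℝ) / 2)) ^ (d - 1)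
      + ((2 * (p : ℝ) + 1) * ((m : ℝ) / 2)) ^ (3 * d - 5) / (m : ℝ) ^ (3 * d - 3) * E 0
    with hX
  have hXnn : ∀ p, 0 ≤ X p := by
    intro p
    have := hnn 0
    have h1 : (0:ℝ) ≤ (2 * (p : ℝ) + 1) * ((m : ℝ) / 2) := by positivity
    positivity
  have hstep : ∀ p, E p ≤ θ * (X p + E (p + 1)) := by
    intro p
    rw [hθ, div_mul_eq_mul_div, le_div_iff₀ hC1]
    have h := hrec p
    rw [hX]
    ring_nf
    ring_nf at h
    linarith
  have key : ∀ Q : ℕ, E 0 ≤ (∑ p ∈ Finset.range Q, θ ^ (p + 1) * X p) + θ ^ Q * E Q := by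
    intro Q
    induction Q with
    | zero => simp
    | succ n ih =>
      calc E 0 ≤ (∑ p ∈ Finset.range n, θ ^ (p + 1) * X p) + θ ^ n * E n := ih
        _ ≤ (∑ p ∈ Finset.range n, θ ^ (p + 1) * X p) + θ ^ n * (θ * (X n + E (n + 1))) := by
            exact add_le_add_right (mul_le_mul_of_nonneg_left (hstep n) (pow_nonneg hθ0 n)) _
        _ = (∑ p ∈ Finset.range (n + 1), θ ^ (p + 1) * X p) + θ ^ (n + 1) * E (n + 1) := by
            rw [Finset.sum_range_succ]; ring
  have hEP : E P = 0 := hP P le_rfl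
  have hkey : E 0 ≤ ∑ p ∈ Finset.range P, θ ^ (p + 1) * X p := by
    have := key P
    rw [hEP] at this
    simpa using this
  -- split the sum
  have hc0 : (0:ℝ) ≤ ((m : ℝ) / 2) ^ (d - 1) := by positivity
  set c : ℝ := ((m : ℝ) / 2) ^ (3 * d - 5) / (m : ℝ) ^ (3 * d - 3) * E 0 with hc
  have hcnn : 0 ≤ c := by
    have := hnn 0
    positivity
  have hsplit : ∀ p : ℕ, θ ^ (p + 1) * X p
      = θ ^ (p + 1) * (2 * (p : ℝ) + 1) ^ (d - 1) * ((m : ℝ) / 2) ^ (d - 1)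
        + θ ^ (p + 1) * (2 * (p : ℝ) + 1) ^ (3 * d - 5) * c := by
    intro p
    rw [hX, hc]
    simp only [mul_pow]
    ring
  have hsum1 := aux_summable θ hθ0 hθ1 (d - 1)
  have hsum2 := aux_summable θ hθ0 hθ1 (3 * d - 5)
  have hb1 : (∑ p ∈ Finset.range P, θ ^ (p + 1) * (2 * (p : ℝ) + 1) ^ (d - 1))
      ≤ A := by
    rw [hA]
    exact Summable.sum_le_tsum _ (fun i _ => by positivity) hsum1
  have hb2 : (∑ p ∈ Finset.range P, θ ^ (p + 1) * (2 * (p : ℝ) + 1) ^ (3 * d - 5))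
      ≤ B := by
    rw [hB]
    exact Summable.sum_le_tsum _ (fun i _ => by positivity) hsum2
  have hmain : E 0 ≤ A * ((m : ℝ) / 2) ^ (d - 1) + B * c := by
    calc E 0 ≤ ∑ p ∈ Finset.range P, θ ^ (p + 1) * X p := hkey
      _ = (∑ p ∈ Finset.range P, θ ^ (p + 1) * (2 * (p : ℝ) + 1) ^ (d - 1)) * ((m : ℝ) / 2) ^ (d - 1)
          + (∑ p ∈ Finset.range P, θ ^ (p + 1) * (2 * (p : ℝ) + 1) ^ (3 * d - 5)) * c := by
          rw [Finset.sum_congr rfl fun p _ => hsplit p, Finset.sum_add_distrib,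
            ← Finset.sum_mul, ← Finset.sum_mul]
      _ ≤ A * ((m : ℝ) / 2) ^ (d - 1) + B * c := by
          gcongr
  -- arithmetic identities
  have hcast1 : ((3 * d - 5 : ℕ) : ℤ) = 3 * (d : ℤ) - 5 := by omega
  have hcast2 : ((d - 1 : ℕ) : ℤ) = (d : ℤ) - 1 := by omega
  have hz2 : (2 : ℝ) ^ ((5 : ℤ) - 3 * d) = ((2 : ℝ) ^ (3 * d - 5 : ℕ))⁻¹ := by
    rw [← zpow_natCast (2 : ℝ) (3 * d - 5), ← zpow_neg]
    congr 1
    omega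
  have hBc : B * c = ((2 : ℝ) ^ ((5 : ℤ) - 3 * d) * B / (m : ℝ) ^ 2) * E 0 := by
    have h1 : ((m : ℝ)) ^ (3 * d - 3) = (m : ℝ) ^ (3 * d - 5) * (m : ℝ) ^ 2 := by
      rw [← pow_add]; congr 1; omega
    rw [hc, hz2, div_pow, h1]
    field_simp
  have ht : (2 : ℝ) ^ ((5 : ℤ) - 3 * d) * B / (m : ℝ) ^ 2 < 1 / 2 := by linarith
  have hE0 : 0 ≤ E 0 := hnn 0
  have half : E 0 ≤ 2 * (A * ((m : ℝ) / 2) ^ (d - 1)) := by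
    nlinarith [mul_le_mul_of_nonneg_right (le_of_lt ht) hE0]
  have hfin : 2 * (A * ((m : ℝ) / 2) ^ (d - 1))
      = (2 : ℝ) ^ ((2 : ℤ) - d) * A * (m : ℝ) ^ (d - 1) := by
    have hz : (2 : ℝ) ^ ((2 : ℤ) - d) = 2 / (2 : ℝ) ^ (d - 1 : ℕ) := by
      rw [eq_div_iff (by positivity), ← zpow_natCast (2 : ℝ) (d - 1),
        ← zpow_add₀ (two_ne_zero)]
      rw [show (2 : ℤ) - d + (d - 1 : ℕ) = 1 by omega]
      norm_num
    rw [hz, div_pow]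
    field_simp
  linarith [hfin ▸ half]
end

section
/- Let d ≥ 2, m ≥ 3, k ≥ m/2, and let y' ∈ ℝ^{d−1} with |y'| < k+1 (sup norm). Then there is C = C(d) with Σ_{j=1}^∞ (k + j(m−1))^{d−2} / (k + j(m−1) − |y'|)^d ≤ C (k+m−1)^{d−2} / ( m (k+m−1−|y'|)^{d−1} ). -/
open Finset

lemma aux_term (d : ℕ) (hd : 2 ≤ d) (M D T : ℝ) (hM : 2 ≤ M) (hMD : M ≤ 2*D)
    (hD : 0 < D) (hDT : D ≤ T) (j : ℕ) :
    (T + (j:ℝ)*M) ^ (d-2) / (D + (j:ℝ)*M) ^ d ≤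
      (T/D)^(d-2) * (3/M) * (1/(D+(j:ℝ)*M) - 1/(D+((j:ℝ)+1)*M)) := by
  have hMpos : (0:ℝ) < M := by linarith
  have hjM : (0:ℝ) ≤ (j:ℝ)*M := by positivity
  have hP : (0:ℝ) < D + (j:ℝ)*M := by linarith
  have hQ : (0:ℝ) < D + ((j:ℝ)+1)*M := by nlinarith
  set P := D + (j:ℝ)*M with hPdef
  set Q := D + ((j:ℝ)+1)*M with hQdef
  have hTj : (0:ℝ) ≤ T + (j:ℝ)*M := by linarith
  -- step 1
  have h1 : T + (j:ℝ)*M ≤ (T/D) * P := by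
    rw [div_mul_eq_mul_div, le_div_iff₀ hD]
    nlinarith
  have h1' : (T + (j:ℝ)*M)^(d-2) ≤ (T/D)^(d-2) * P^(d-2) := by
    rw [← mul_pow]
    exact pow_le_pow_left₀ hTj h1 _
  have hstep : (T + (j:ℝ)*M) ^ (d-2) / P ^ d ≤ (T/D)^(d-2) / P^2 := by
    have hPd : P ^ d = P^2 * P^(d-2) := by
      rw [← pow_add]
      congr 1
      omega
    calc (T + (j:ℝ)*M) ^ (d-2) / P ^ d ≤ ((T/D)^(d-2) * P^(d-2)) / P^d := by
          apply div_le_div_of_nonneg_right h1' (by positivity) |>.trans_eq rfl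
      _ = (T/D)^(d-2) / P^2 := by
          rw [hPd, mul_div_mul_right _ _ (by positivity : P^(d-2) ≠ 0)]
  refine hstep.trans ?_
  have hcore : 1/P^2 ≤ (3/M) * (1/P - 1/Q) := by
    have hsub : 1/P - 1/Q = M/(P*Q) := by
      field_simp
      rw [hPdef, hQdef]; ring
    rw [hsub]
    have : (3/M) * (M/(P*Q)) = 3/(P*Q) := by field_simp
    rw [this, div_le_div_iff₀ (pow_pos hP 2) (mul_pos hP hQ)]
    have hQ3P : Q ≤ 3*P := by rw [hPdef, hQdef]; nlinarith
    nlinarith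
  calc (T/D)^(d-2) / P^2 = (T/D)^(d-2) * (1/P^2) := by ring
    _ ≤ (T/D)^(d-2) * ((3/M) * (1/P - 1/Q)) := by
        apply mul_le_mul_of_nonneg_left hcore (pow_nonneg (div_nonneg (by linarith) hD.le) _)
    _ = (T/D)^(d-2) * (3/M) * (1/P - 1/Q) := by ring

/-- summation of the annulus contributions:
Σ_{j≥1} (k+j(m−1))^{d−2}/(k+j(m−1)−|y'|)^d ≤ C (k+m−1)^{d−2}/(m (k+m−1−|y'|)^{d−1}). -/
theorem stmt_11 (d : ℕ) (hd : 2 ≤ d) :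
    ∃ C : ℝ, 0 < C ∧ ∀ (m k : ℕ), 3 ≤ m → m ≤ 2 * k →
      ∀ y' : Fin (d - 1) → ℝ, ‖y'‖ < (k : ℝ) + 1 →
        (∑' j : ℕ, ((k : ℝ) + ((j : ℝ) + 1) * ((m : ℝ) - 1)) ^ (d - 2) /
            ((k : ℝ) + ((j : ℝ) + 1) * ((m : ℝ) - 1) - ‖y'‖) ^ d)
          ≤ C * ((k : ℝ) + m - 1) ^ (d - 2) / ((m : ℝ) * ((k : ℝ) + m - 1 - ‖y'‖) ^ (d - 1)) := by
  refine ⟨5, by norm_num, ?_⟩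
  intro m k hm hk y' ha
  have ha0 : (0:ℝ) ≤ ‖y'‖ := norm_nonneg _
  have hmr : (3:ℝ) ≤ (m:ℝ) := by exact_mod_cast hm
  set a := ‖y'‖ with hadef
  set M : ℝ := (m:ℝ) - 1 with hMdef
  set T : ℝ := (k:ℝ) + M with hTdef
  set D : ℝ := T - a with hDdef
  have hM : (2:ℝ) ≤ M := by rw [hMdef]; linarith
  have hD : (0:ℝ) < D := by rw [hDdef, hTdef]; linarith
  have hDT : D ≤ T := by rw [hDdef]; linarith
  have hMD : M ≤ 2*D := by rw [hDdef, hTdef]; linarith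
  have hTpos : (0:ℝ) < T := by linarith
  have hMpos : (0:ℝ) < M := by linarith
  -- summand rewrite
  have hterm : ∀ j : ℕ, ((k : ℝ) + ((j : ℝ) + 1) * ((m : ℝ) - 1)) ^ (d - 2) /
      ((k : ℝ) + ((j : ℝ) + 1) * ((m : ℝ) - 1) - a) ^ d
      = (T + (j:ℝ)*M) ^ (d-2) / (D + (j:ℝ)*M) ^ d := by
    intro j
    rw [hDdef, hTdef, hMdef]
    ring_nf
  set f : ℕ → ℝ := fun j => ((k : ℝ) + ((j : ℝ) + 1) * ((m : ℝ) - 1)) ^ (d - 2) /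
      ((k : ℝ) + ((j : ℝ) + 1) * ((m : ℝ) - 1) - a) ^ d with hfdef
  set g : ℕ → ℝ := fun j => (T/D)^(d-2) * (3/M) * (1/(D + (j:ℝ)*M)) with hgdef
  have hgnn : ∀ n : ℕ, 0 ≤ g n := by
    intro n
    have : (0:ℝ) < D + (n:ℝ)*M := by positivity
    rw [hgdef]
    positivity
  have hfg : ∀ j : ℕ, f j ≤ g j - g (j+1) := by
    intro j
    rw [hfdef]
    simp only []
    rw [hterm j]
    have := aux_term d hd M D T hM hMD hD hDT j
    refine this.trans_eq ?_
    rw [hgdef]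
    push_cast
    ring
  have hfnn : ∀ j : ℕ, 0 ≤ f j := by
    intro j
    have hbase : (0:ℝ) < (k:ℝ) + ((j:ℝ)+1)*((m:ℝ)-1) := by nlinarith
    have hden : (0:ℝ) < (k:ℝ) + ((j:ℝ)+1)*((m:ℝ)-1) - a := by
      have : D + (j:ℝ)*M ≤ (k:ℝ) + ((j:ℝ)+1)*((m:ℝ)-1) - a := by
        rw [hDdef, hTdef, hMdef]; nlinarith
      have h2 : (0:ℝ) < D + (j:ℝ)*M := by positivity
      linarith
    rw [hfdef]
    positivity
  -- final bound value
  have hfin : g 0 ≤ 5 * ((k:ℝ) + m - 1)^(d-2) / ((m:ℝ) * ((k:ℝ) + m - 1 - a)^(d-1)) := by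
    have hT' : (k:ℝ) + m - 1 = T := by rw [hTdef, hMdef]; ring
    have hD' : (k:ℝ) + m - 1 - a = D := by rw [hDdef]; linarith
    rw [hD', hT']
    have hg0 : g 0 = 3 * T^(d-2) / (M * D^(d-1)) := by
      rw [hgdef]
      simp only [Nat.cast_zero, zero_mul, add_zero]
      rw [div_pow]
      have hDd : D^(d-1) = D^(d-2) * D := by
        rw [← pow_succ]; congr 1; omega
      rw [hDd]
      field_simp
    rw [hg0]
    rw [div_le_div_iff₀ (by positivity) (by positivity)]
    have hTn : (0:ℝ) ≤ T^(d-2) := by positivity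
    have hDn : (0:ℝ) ≤ D^(d-1) := by positivity
    have hkey : 3 * (m:ℝ) ≤ 5 * M := by rw [hMdef]; linarith
    calc 3 * T^(d-2) * ((m:ℝ) * D^(d-1)) = (3*(m:ℝ)) * (T^(d-2) * D^(d-1)) := by ring
      _ ≤ (5*M) * (T^(d-2) * D^(d-1)) := by
          apply mul_le_mul_of_nonneg_right hkey (by positivity)
      _ = 5 * T^(d-2) * (M * D^(d-1)) := by ring
  apply Real.tsum_le_of_sum_range_le hfnn
  intro n
  calc ∑ i ∈ range n, f i ≤ ∑ i ∈ range n, (g i - g (i+1)) := sum_le_sum (fun i _ => hfg i)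
    _ = g 0 - g n := Finset.sum_range_sub' g n
    _ ≤ g 0 := by linarith [hgnn n]
    _ ≤ _ := hfin
end
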